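/- (Proposition 2: pathwise characterization of weak optimality.) Let M be a martingale with M_0 = 0 and fix 0 ≤ j ≤ J. Then M ∈ M^{∘,j} if and only if for every stopping time τ taking values in {j,…,J} that is optimal, i.e. Y*_j = E[Z_τ | F_j] almost surely, one has max_{j ≤ r ≤ J} (Z_r − M_r) = Z_τ − M_τ almost surely. -/

import Mathlib

open MeasureTheory Finset

section Helpers

variable {Ω : Type*} {mΩ : MeasurableSpace Ω} {μ : Measure Ω}

private lemma integrable_sup'_aux {s : Finset ℕ} (hs : s.Nonempty) (f : ℕ → Ω → ℝ)
    (hf : ∀ i ∈ s, Integrable (f i) μ) :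
    Integrable (fun ω => s.sup' hs fun i => f i ω) μ := by
  induction hs using Finset.Nonempty.cons_induction with
  | singleton a => exact hf a (Finset.mem_singleton_self a)
  | cons a s ha hs ih =>
      have heq : (fun ω => (Finset.cons a s ha).sup' (Finset.cons_nonempty ha) fun i => f i ω)
          = fun ω => (f a ω) ⊔ (s.sup' hs fun i => f i ω) :=
        funext fun ω => Finset.sup'_cons hs _
      rw [heq]
      exact Integrable.sup (hf a (by simp)) (ih fun i hi => hf i (by simp [hi]))

private lemma integrable_stopped_aux (ℱ : Filtration ℕ mΩ) (X : ℕ → Ω → ℝ)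
    (hX : ∀ r, Integrable (X r) μ) {τ : Ω → ℕ} (hτ : IsStoppingTime ℱ (fun ω => (τ ω : WithTop ℕ)))
    {j J : ℕ} (hτb : ∀ ω, j ≤ τ ω ∧ τ ω ≤ J) :
    Integrable (fun ω => X (τ ω) ω) μ := by
  have heq : (fun ω => X (τ ω) ω)
      = fun ω => ∑ r ∈ Finset.Icc j J, Set.indicator {ω' | τ ω' = r} (X r) ω := by
    funext ω
    rw [Finset.sum_eq_single_of_mem (τ ω) (by simp [Finset.mem_Icc, (hτb ω).1, (hτb ω).2])]
    · simp [Set.indicator_of_mem, Set.mem_setOf_eq]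
    · intro r _ hne
      exact Set.indicator_of_notMem (fun h => hne (Set.mem_setOf_eq ▸ h).symm) _
  rw [heq]
  exact integrable_finset_sum _ fun r _ =>
    (hX r).indicator (ℱ.le r _ (by simpa using hτ.measurableSet_eq r))

private lemma condexp_stopped_mart [IsProbabilityMeasure μ] {ℱ : Filtration ℕ mΩ}
    {M : ℕ → Ω → ℝ} (hM : Martingale M ℱ μ) {τ : Ω → ℕ} (hτ : IsStoppingTime ℱ (fun ω => (τ ω : WithTop ℕ)))
    {j J : ℕ} (hτb : ∀ ω, j ≤ τ ω ∧ τ ω ≤ J) :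
    (μ[fun ω => M (τ ω) ω | ℱ j]) =ᵐ[μ] M j := by
  have hσ : IsStoppingTime ℱ (fun _ : Ω => (j : WithTop ℕ)) := isStoppingTime_const ℱ j
  have h := hM.stoppedValue_ae_eq_condExp_of_le hτ hσ (fun ω => WithTop.coe_le_coe.mpr (hτb ω).1)
    (fun ω => WithTop.coe_le_coe.mpr (hτb ω).2)
  rw [IsStoppingTime.measurableSpace_const] at h
  exact h.symm

/-- The first time `r ≥ k` at which `Y r = Z r`. -/
private noncomputable def snellτ (Y Z : ℕ → Ω → ℝ) (k : ℕ) (ω : Ω) : ℕ :=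
  sInf {r | k ≤ r ∧ Y r ω = Z r ω}

variable {J : ℕ} {Y Z : ℕ → Ω → ℝ}

private lemma snellτ_mem (hYJ : ∀ ω, Y J ω = Z J ω) {k : ℕ} (hk : k ≤ J) (ω : Ω) :
    k ≤ snellτ Y Z k ω ∧ snellτ Y Z k ω ≤ J ∧
      Y (snellτ Y Z k ω) ω = Z (snellτ Y Z k ω) ω := by
  have hne : {r | k ≤ r ∧ Y r ω = Z r ω}.Nonempty := ⟨J, hk, hYJ ω⟩
  have hmem := Nat.sInf_mem hne
  exact ⟨hmem.1, Nat.sInf_le ⟨hk, hYJ ω⟩, hmem.2⟩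

private lemma snellτ_eq_self {k : ℕ} {ω : Ω} (h : Y k ω = Z k ω) :
    snellτ Y Z k ω = k := by
  have h1 : k ∈ {r | k ≤ r ∧ Y r ω = Z r ω} := ⟨le_rfl, h⟩
  exact le_antisymm (Nat.sInf_le h1) (Nat.sInf_mem ⟨k, h1⟩).1

private lemma snellτ_succ {k : ℕ} {ω : Ω} (h : Y k ω ≠ Z k ω) :
    snellτ Y Z k ω = snellτ Y Z (k + 1) ω := by
  unfold snellτ
  congr 1
  ext r
  simp only [Set.mem_setOf_eq, and_congr_left_iff]
  intro hr
  constructor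
  · intro hkr
    rcases eq_or_lt_of_le hkr with rfl | h'
    · exact absurd hr h
    · exact h'
  · intro h'; omega

private lemma snellτ_isStoppingTime {ℱ : Filtration ℕ mΩ}
    (hZ_adapted : Adapted ℱ Z) (hYsm : ∀ r, r ≤ J → StronglyMeasurable[ℱ r] (Y r))
    (hYJ : ∀ ω, Y J ω = Z J ω) {k : ℕ} (hk : k ≤ J) :
    IsStoppingTime ℱ (fun ω => (snellτ Y Z k ω : WithTop ℕ)) := by
  intro n
  have hset : {ω | snellτ Y Z k ω ≤ n}
      = ⋃ r ∈ Set.Icc k (min n J), {ω | Y r ω = Z r ω} := by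
    ext ω
    simp only [Set.mem_setOf_eq, Set.mem_iUnion, Set.mem_Icc, exists_prop]
    constructor
    · intro h
      obtain ⟨h1, h2, h3⟩ := snellτ_mem hYJ hk ω
      exact ⟨snellτ Y Z k ω, ⟨h1, le_min h h2⟩, h3⟩
    · rintro ⟨r, ⟨hkr, hrn⟩, hr⟩
      exact le_trans (Nat.sInf_le ⟨hkr, hr⟩) (le_trans hrn (min_le_left _ _))
  suffices h : MeasurableSet[ℱ n] {ω | snellτ Y Z k ω ≤ n} by
    convert h using 1
    ext ω
    simp
  rw [hset]
  refine MeasurableSet.biUnion (Set.to_countable _) fun r hr => ?_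
  refine ℱ.mono (le_trans hr.2 (min_le_left _ _)) _ ?_
  exact StronglyMeasurable.measurableSet_eq_fun (hYsm r (le_trans hr.2 (min_le_right _ _))) (hZ_adapted r).stronglyMeasurable

private lemma snell_optimal [IsProbabilityMeasure μ] {ℱ : Filtration ℕ mΩ}
    (hZ_adapted : Adapted ℱ Z) (hZ_int : ∀ j, Integrable (Z j) μ)
    (hYJ : ∀ ω, Y J ω = Z J ω)
    (hY : ∀ j, j < J → ∀ ω, Y j ω = max (Z j ω) ((μ[Y (j + 1) | ℱ j]) ω))
    (hYsm : ∀ r, r ≤ J → StronglyMeasurable[ℱ r] (Y r))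
    (hYint : ∀ r, r ≤ J → Integrable (Y r) μ) :
    ∀ d k, k + d = J → (μ[fun ω => Z (snellτ Y Z k ω) ω | ℱ k]) =ᵐ[μ] Y k := by
  intro d
  induction d with
  | zero =>
      intro k hk
      rw [Nat.add_zero] at hk
      subst hk
      have hτ : (fun ω => Z (snellτ Y Z k ω) ω) = Y k := by
        funext ω
        rw [snellτ_eq_self (hYJ ω), hYJ ω]
      rw [hτ, condExp_of_stronglyMeasurable (ℱ.le k) (hYsm k le_rfl) (hYint k le_rfl)]
  | succ d ih =>
      intro k hk
      have hkJ : k < J := by omega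
      have hk1 : k + 1 ≤ J := hkJ
      have ih' := ih (k + 1) (by omega)
      set A : Set Ω := {ω | Y k ω = Z k ω} with hA_def
      have hA : MeasurableSet[ℱ k] A :=
        StronglyMeasurable.measurableSet_eq_fun (hYsm k hkJ.le) (hZ_adapted k).stronglyMeasurable
      have hτst1 : IsStoppingTime ℱ (fun ω => (snellτ Y Z (k + 1) ω : WithTop ℕ)) :=
        snellτ_isStoppingTime hZ_adapted hYsm hYJ hk1
      have hW_int : Integrable (fun ω => Z (snellτ Y Z (k + 1) ω) ω) μ :=
        integrable_stopped_aux ℱ Z hZ_int hτst1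
          (fun ω => ⟨(snellτ_mem hYJ hk1 ω).1, (snellτ_mem hYJ hk1 ω).2.1⟩)
      have hdecomp : (fun ω => Z (snellτ Y Z k ω) ω)
          = A.indicator (Z k) + Aᶜ.indicator (fun ω => Z (snellτ Y Z (k + 1) ω) ω) := by
        funext ω
        by_cases hω : Y k ω = Z k ω
        · have : snellτ Y Z k ω = k := snellτ_eq_self hω
          simp [this, Set.indicator_of_mem, Set.indicator_of_notMem, hω, hA_def,
            Set.mem_setOf_eq]
        · have : snellτ Y Z k ω = snellτ Y Z (k + 1) ω := snellτ_succ hω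
          simp [this, Set.indicator_of_mem, Set.indicator_of_notMem, hω, hA_def,
            Set.mem_setOf_eq]
      have hind1_int : Integrable (A.indicator (Z k)) μ :=
        (hZ_int k).indicator (ℱ.le k _ hA)
      have hind2_int : Integrable (Aᶜ.indicator fun ω => Z (snellτ Y Z (k + 1) ω) ω) μ :=
        hW_int.indicator (ℱ.le k _ hA.compl)
      have h_add := condExp_add (μ := μ) (m := ℱ k) hind1_int hind2_int
      have h_ind1 := condExp_indicator (μ := μ) (m := ℱ k) (hZ_int k) hA
      have h_ind2 := condExp_indicator (μ := μ) (m := ℱ k) hW_int hA.compl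
      have h_Zk : (μ[Z k | ℱ k]) = Z k :=
        condExp_of_stronglyMeasurable (ℱ.le k) (hZ_adapted k).stronglyMeasurable (hZ_int k)
      have h_tower : (μ[fun ω => Z (snellτ Y Z (k + 1) ω) ω | ℱ k])
          =ᵐ[μ] μ[Y (k + 1) | ℱ k] :=
        ((condExp_condExp_of_le (ℱ.mono (Nat.le_succ k)) (ℱ.le (k + 1))).symm).trans
          (condExp_congr_ae ih')
      rw [hdecomp]
      refine h_add.trans ?_
      have h_ind2' : (μ[Aᶜ.indicator fun ω => Z (snellτ Y Z (k + 1) ω) ω | ℱ k])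
          =ᵐ[μ] Aᶜ.indicator (μ[Y (k + 1) | ℱ k]) :=
        h_ind2.trans (h_tower.indicator (s := Aᶜ))
      filter_upwards [h_ind1, h_ind2'] with ω hω1 hω2
      rw [Pi.add_apply, hω1, hω2, h_Zk]
      by_cases hω : Y k ω = Z k ω
      · have hmem : ω ∈ A := hω
        rw [Set.indicator_of_mem hmem, Set.indicator_of_notMem (by simp [hmem])]
        simpa using hω.symm
      · have hmem : ω ∉ A := hω
        rw [Set.indicator_of_notMem hmem, Set.indicator_of_mem (by simpa using hmem)]
        have := hY k hkJ ω
        rcases max_cases (Z k ω) ((μ[Y (k + 1) | ℱ k]) ω) with ⟨h1, _⟩ | ⟨h1, _⟩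
        · exact absurd (this.trans h1) hω
        · rw [zero_add, ← h1, ← this]
  
end Helpers

/-- **Proposition 2: pathwise characterization of weak optimality.**
Let `M` be a martingale with `M 0 = 0` and fix `0 ≤ j ≤ J`. Then `M` is weakly optimal at `j`
if and only if for every stopping time `τ` taking values in `{j,…,J}` that is optimal, i.e.
`Y⋆ j = E[Z τ | ℱ j]` a.s., one has `max_{j ≤ r ≤ J} (Z r − M r) = Z τ − M τ` a.s. -/
theorem weakly_optimal_iff_attained_at_optimal_stopping_times
    {Ω : Type*} {mΩ : MeasurableSpace Ω} {μ : Measure Ω} [IsProbabilityMeasure μ]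
    (J : ℕ) (ℱ : Filtration ℕ mΩ)
    (Z Y : ℕ → Ω → ℝ)
    (hZ_adapted : Adapted ℱ Z)
    (hZ_int : ∀ j, Integrable (Z j) μ)
    (hYJ : ∀ ω, Y J ω = Z J ω)
    (hY : ∀ j, j < J → ∀ ω, Y j ω = max (Z j ω) ((μ[Y (j + 1) | ℱ j]) ω))
    (M : ℕ → Ω → ℝ) (hM : Martingale M ℱ μ) (hM0 : ∀ ω, M 0 ω = 0)
    (j : ℕ) (hj : j ≤ J) :
    (Y j =ᵐ[μ] μ[fun ω => (Finset.Icc j J).sup' (Finset.nonempty_Icc.mpr hj)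
        (fun r => Z r ω - M r ω + M j ω) | ℱ j])
    ↔
    (∀ τ : Ω → ℕ, IsStoppingTime ℱ (fun ω => (τ ω : WithTop ℕ)) → (∀ ω, j ≤ τ ω ∧ τ ω ≤ J) →
      (Y j =ᵐ[μ] μ[fun ω => Z (τ ω) ω | ℱ j]) →
      ∀ᵐ ω ∂μ, (Finset.Icc j J).sup' (Finset.nonempty_Icc.mpr hj)
        (fun r => Z r ω - M r ω) = Z (τ ω) ω - M (τ ω) ω) := by
  classical
  -- abbreviations
  set S : Ω → ℝ := fun ω => (Finset.Icc j J).sup' (Finset.nonempty_Icc.mpr hj)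
      (fun r => Z r ω - M r ω) with hS_def
  have hSrw : (fun ω => (Finset.Icc j J).sup' (Finset.nonempty_Icc.mpr hj)
      (fun r => Z r ω - M r ω + M j ω)) = fun ω => S ω + M j ω := by
    funext ω
    exact (Finset.comp_sup'_eq_sup'_comp _ (· + M j ω)
      (fun x y => (max_add_add_right x y _).symm)).symm
  have hSint : Integrable S μ :=
    integrable_sup'_aux _ (fun i => Z i - M i)
      (fun i _ => (hZ_int i).sub (hM.integrable i))
  have hMj_sm : StronglyMeasurable[ℱ j] (M j) := hM.stronglyAdapted j
  have hMj_int : Integrable (M j) μ := hM.integrable j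
  -- measurability and integrability of Y
  have hYsm : ∀ r, r ≤ J → StronglyMeasurable[ℱ r] (Y r) := by
    intro r hr
    rcases eq_or_lt_of_le hr with rfl | hr'
    · have : Y r = Z r := funext hYJ
      rw [this]; exact (hZ_adapted r).stronglyMeasurable
    · have heq : Y r = fun ω => max (Z r ω) ((μ[Y (r + 1) | ℱ r]) ω) := funext (hY r hr')
      rw [heq]
      letI : MeasurableSpace Ω := ℱ r
      exact (hZ_adapted r).stronglyMeasurable.sup stronglyMeasurable_condExp
  have hYint : ∀ r, r ≤ J → Integrable (Y r) μ := by
    intro r hr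
    rcases eq_or_lt_of_le hr with rfl | hr'
    · have : Y r = Z r := funext hYJ
      rw [this]; exact hZ_int r
    · have : Y r = fun ω => max (Z r ω) ((μ[Y (r + 1) | ℱ r]) ω) := funext (hY r hr')
      rw [this]
      exact (hZ_int r).sup integrable_condExp
  constructor
  · -- weakly optimal → attained at every optimal stopping time
    intro hopt τ hτst hτb hτopt
    rw [hSrw] at hopt
    have hZτint : Integrable (fun ω => Z (τ ω) ω) μ :=
      integrable_stopped_aux ℱ Z hZ_int hτst hτb
    have hMτint : Integrable (fun ω => M (τ ω) ω) μ :=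
      integrable_stopped_aux ℱ M hM.integrable hτst hτb
    have hD_nonneg : ∀ ω, 0 ≤ S ω - (Z (τ ω) ω - M (τ ω) ω) := by
      intro ω
      rw [sub_nonneg]
      exact Finset.le_sup' (f := fun r => Z r ω - M r ω)
        (Finset.mem_Icc.mpr ⟨(hτb ω).1, (hτb ω).2⟩)
    have hDint : Integrable (fun ω => S ω - (Z (τ ω) ω - M (τ ω) ω)) μ :=
      hSint.sub (hZτint.sub hMτint)
    -- integrals
    have h1 : ∫ ω, Y j ω ∂μ = ∫ ω, S ω ∂μ + ∫ ω, M j ω ∂μ := by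
      rw [integral_congr_ae hopt, integral_condExp (ℱ.le j),
        integral_add hSint hMj_int]
    have h2 : ∫ ω, Y j ω ∂μ = ∫ ω, Z (τ ω) ω ∂μ := by
      rw [integral_congr_ae hτopt, integral_condExp (ℱ.le j)]
    have h3 : ∫ ω, M (τ ω) ω ∂μ = ∫ ω, M j ω ∂μ := by
      have := condexp_stopped_mart hM hτst hτb
      rw [← integral_condExp (ℱ.le j) (f := fun ω => M (τ ω) ω),
        integral_congr_ae this]
    have hDzero : ∫ ω, S ω - (Z (τ ω) ω - M (τ ω) ω) ∂μ = 0 := by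
      have e1 : ∫ ω, S ω - (Z (τ ω) ω - M (τ ω) ω) ∂μ
          = ∫ ω, S ω ∂μ - ∫ ω, Z (τ ω) ω - M (τ ω) ω ∂μ :=
        integral_sub hSint (hZτint.sub hMτint)
      have e2 : ∫ ω, Z (τ ω) ω - M (τ ω) ω ∂μ
          = ∫ ω, Z (τ ω) ω ∂μ - ∫ ω, M (τ ω) ω ∂μ :=
        integral_sub hZτint hMτint
      rw [e1, e2]
      linarith
    have hD0 : (fun ω => S ω - (Z (τ ω) ω - M (τ ω) ω)) =ᵐ[μ] 0 :=
      (integral_eq_zero_iff_of_nonneg hD_nonneg hDint).1 hDzero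
    filter_upwards [hD0] with ω hω
    have h0 : S ω - (Z (τ ω) ω - M (τ ω) ω) = 0 := hω
    have h2 : S ω = Z (τ ω) ω - M (τ ω) ω := by linarith
    exact h2
  · -- attained at every optimal stopping time → weakly optimal
    intro hstop
    set τ : Ω → ℕ := snellτ Y Z j with hτ_def
    have hτst : IsStoppingTime ℱ (fun ω => (τ ω : WithTop ℕ)) := snellτ_isStoppingTime hZ_adapted hYsm hYJ hj
    have hτb : ∀ ω, j ≤ τ ω ∧ τ ω ≤ J :=
      fun ω => ⟨(snellτ_mem hYJ hj ω).1, (snellτ_mem hYJ hj ω).2.1⟩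
    have hτopt : (μ[fun ω => Z (τ ω) ω | ℱ j]) =ᵐ[μ] Y j :=
      snell_optimal hZ_adapted hZ_int hYJ hY hYsm hYint (J - j) j (by omega)
    have hatt := hstop τ hτst hτb hτopt.symm
    rw [hSrw]
    have hZτint : Integrable (fun ω => Z (τ ω) ω) μ :=
      integrable_stopped_aux ℱ Z hZ_int hτst hτb
    have hMτint : Integrable (fun ω => M (τ ω) ω) μ :=
      integrable_stopped_aux ℱ M hM.integrable hτst hτb
    have hae : (fun ω => S ω + M j ω)
        =ᵐ[μ] fun ω => Z (τ ω) ω - M (τ ω) ω + M j ω := by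
      filter_upwards [hatt] with ω hω
      rw [show S ω = Z (τ ω) ω - M (τ ω) ω from hω]
    have h_ce := condExp_congr_ae (m := ℱ j) hae
    have h_add := condExp_add (μ := μ) (m := ℱ j) (hZτint.sub hMτint) hMj_int
    have h_sub := condExp_sub (μ := μ) (m := ℱ j) hZτint hMτint
    have h_Mj : (μ[M j | ℱ j]) = M j :=
      condExp_of_stronglyMeasurable (ℱ.le j) hMj_sm hMj_int
    have h_Mτ := condexp_stopped_mart hM hτst hτb
    refine Filter.EventuallyEq.symm (h_ce.trans ?_)
    refine h_add.trans ?_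
    filter_upwards [h_sub, hτopt, h_Mτ] with ω hω1 hω2 hω3
    rw [Pi.add_apply, hω1, h_Mj, Pi.sub_apply, hω2, hω3]
    ring
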